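/- Let Ξ ⊆ M be a finite set of centers contained in M, let K_Ξ := span{K_ξ y : ξ ∈ Ξ, y ∈ Y} ⊆ H, and let Π be the orthogonal projection of H onto the closure of K_Ξ. Suppose ‖E_x‖ ≤ k̄ for all x ∈ X, and let f := ∫_X K_ξ(v(ξ)) dμ(ξ) (a Bochner integral in H). Then for every x ∈ X, ‖E_x(f − Π f)‖_Y ≤ k̄ · (μ(X))^{1/2} · (sup_{ξ ∈ M} ‖E_ξ ∘ (id_H − Π) ∘ K_ξ‖_{L(Y)}^{1/2}) · (∫_X ‖v(ξ)‖_Y² dμ(ξ))^{1/2}. (This is the paper's Theorem 3.1, the 'doubling trick' global pointwise error bound for uncertainties in a maneuver vRKHS satisfying the regularity condition f = Lv.) -/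

import Mathlib

open MeasureTheory
open scoped InnerProductSpace

-- Cauchy-Schwarz for integrals: ∫ ‖v‖ ≤ √(μ univ) * √(∫ ‖v‖²)
lemma integral_norm_le_sqrt_mul_sqrt {X Y : Type*} [MeasurableSpace X]
    [NormedAddCommGroup Y]
    (μ : Measure X) [IsFiniteMeasure μ] (v : X → Y)
    (hv : AEStronglyMeasurable v μ)
    (hv2 : Integrable (fun ξ => ‖v ξ‖ ^ 2) μ) :
    ∫ ξ, ‖v ξ‖ ∂μ ≤ Real.sqrt (μ Set.univ).toReal * Real.sqrt (∫ ξ, ‖v ξ‖ ^ 2 ∂μ) := by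
  have hpq : Real.HolderConjugate 2 2 := Real.HolderConjugate.two_two
  have h1 : MemLp (fun _ : X => (1 : ℝ)) (ENNReal.ofReal 2) μ := memLp_const 1
  have h2 : MemLp (fun ξ => ‖v ξ‖) (ENNReal.ofReal 2) μ := by
    have : (ENNReal.ofReal 2) = 2 := by norm_num
    rw [this]
    exact (memLp_two_iff_integrable_sq hv.norm).2 hv2
  have := integral_mul_le_Lp_mul_Lq_of_nonneg hpq
    (Filter.Eventually.of_forall fun _ => zero_le_one)
    (Filter.Eventually.of_forall fun ξ => norm_nonneg (v ξ)) h1 h2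
  simp only [one_mul] at this
  calc ∫ ξ, ‖v ξ‖ ∂μ
      ≤ (∫ _ : X, (1:ℝ) ^ (2:ℝ) ∂μ) ^ (1/(2:ℝ)) * (∫ ξ, ‖v ξ‖ ^ (2:ℝ) ∂μ) ^ (1/(2:ℝ)) := this
    _ = Real.sqrt (μ Set.univ).toReal * Real.sqrt (∫ ξ, ‖v ξ‖ ^ 2 ∂μ) := by
        rw [Real.sqrt_eq_rpow, Real.sqrt_eq_rpow]
        congr 2
        · simp [Measure.real]
        · refine integral_congr_ae (Filter.Eventually.of_forall fun ξ => ?_)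
          exact_mod_cast Real.rpow_natCast (‖v ξ‖) 2

set_option maxHeartbeats 1000000 in
theorem doubling_trick_global_pointwise_error_bound
    {X H Y : Type*} [MeasurableSpace X]
    [NormedAddCommGroup H] [InnerProductSpace ℝ H] [CompleteSpace H]
    [NormedAddCommGroup Y] [InnerProductSpace ℝ Y] [CompleteSpace Y]
    (E : X → H →L[ℝ] Y)
    (μ : Measure X) [IsFiniteMeasure μ]
    (M : Set X) (hM : MeasurableSet M) (hMc : μ Mᶜ = 0)
    (v : X → Y) (hv : AEStronglyMeasurable v μ)
    (hv2 : Integrable (fun ξ => ‖v ξ‖ ^ 2) μ)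
    (hKv : Integrable (fun ξ => (E ξ).adjoint (v ξ)) μ)
    (kbar : ℝ) (hk : ∀ x : X, ‖E x‖ ≤ kbar)
    (Ξ : Set X) (hΞfin : Ξ.Finite) (hΞM : Ξ ⊆ M)
    (P : H →L[ℝ] H)
    (hP : ∀ g : H,
      P g ∈ (Submodule.span ℝ
          {w : H | ∃ ξ ∈ Ξ, ∃ y : Y, w = (E ξ).adjoint y}).topologicalClosure ∧
      g - P g ∈ (Submodule.span ℝ
          {w : H | ∃ ξ ∈ Ξ, ∃ y : Y, w = (E ξ).adjoint y}).topologicalClosureᗮ)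
    (f : H) (hf : f = ∫ ξ, (E ξ).adjoint (v ξ) ∂μ) :
    ∀ x : X,
      ‖(E x) (f - P f)‖
        ≤ kbar * Real.sqrt (μ Set.univ).toReal
            * (⨆ ξ : M, Real.sqrt
                ‖(E (ξ : X)).comp
                    ((ContinuousLinearMap.id ℝ H - P).comp (E (ξ : X)).adjoint)‖)
            * Real.sqrt (∫ ξ, ‖v ξ‖ ^ 2 ∂μ) := by
  intro x
  set S : Submodule ℝ H := (Submodule.span ℝ
      {w : H | ∃ ξ ∈ Ξ, ∃ y : Y, w = (E ξ).adjoint y}).topologicalClosure with hS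
  set Q : H →L[ℝ] H := ContinuousLinearMap.id ℝ H - P with hQdef
  have hQapp : ∀ g : H, Q g = g - P g := fun g => rfl
  -- P is self-adjoint
  have hPsa : ∀ g h : H, ⟪P g, h⟫_ℝ = ⟪g, P h⟫_ℝ := by
    intro g h
    have h1 : ⟪P h, g - P g⟫_ℝ = 0 :=
      (Submodule.mem_orthogonal S (g - P g)).1 (hP g).2 (P h) (hP h).1
    have h2 : ⟪P g, h - P h⟫_ℝ = 0 :=
      (Submodule.mem_orthogonal S (h - P h)).1 (hP h).2 (P g) (hP g).1
    have e1 : ⟪P h, g⟫_ℝ = ⟪P h, P g⟫_ℝ := by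
      have := h1; rw [inner_sub_right] at this; linarith
    have e2 : ⟪P g, h⟫_ℝ = ⟪P g, P h⟫_ℝ := by
      have := h2; rw [inner_sub_right] at this; linarith
    rw [e2, real_inner_comm, ← e1, real_inner_comm]
  have hQsa : ∀ g h : H, ⟪Q g, h⟫_ℝ = ⟪g, Q h⟫_ℝ := by
    intro g h
    simp only [hQapp, inner_sub_left, inner_sub_right, hPsa]
  -- Q is idempotent
  have hPQ : ∀ g : H, P (Q g) = 0 := by
    intro g
    have hmem : P (Q g) ∈ S := (hP (Q g)).1
    have hmem2 : P (Q g) ∈ Sᗮ := by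
      have h1 : Q g ∈ Sᗮ := (hP g).2
      have h2 : Q g - P (Q g) ∈ Sᗮ := (hP (Q g)).2
      have : Q g - (Q g - P (Q g)) ∈ Sᗮ := Sᗮ.sub_mem h1 h2
      simpa using this
    have : ⟪P (Q g), P (Q g)⟫_ℝ = 0 :=
      (Submodule.mem_orthogonal S _).1 hmem2 _ hmem
    exact inner_self_eq_zero.1 this
  have hQidem : ∀ g : H, Q (Q g) = Q g := by
    intro g; rw [hQapp (Q g), hPQ g, sub_zero]
  -- norm of Q g ≤ norm g
  have hQnorm : ∀ g : H, ‖Q g‖ ≤ ‖g‖ := by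
    intro g
    have h1 : ‖Q g‖ ^ 2 = ⟪g, Q g⟫_ℝ := by
      rw [← real_inner_self_eq_norm_sq, hQsa g (Q g), hQidem g]
    have h2 : ⟪g, Q g⟫_ℝ ≤ ‖g‖ * ‖Q g‖ := real_inner_le_norm g (Q g)
    nlinarith [norm_nonneg (Q g), norm_nonneg g]
  have hkx : (0:ℝ) ≤ kbar := le_trans (norm_nonneg _) (hk x)
  -- the sup
  set Ssup : ℝ := ⨆ ξ : M, Real.sqrt
      ‖(E (ξ : X)).comp (Q.comp (E (ξ : X)).adjoint)‖ with hSsup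
  have hSsup_nonneg : 0 ≤ Ssup := Real.iSup_nonneg fun ξ => Real.sqrt_nonneg _
  have hbdd : BddAbove (Set.range fun ξ : M => Real.sqrt
      ‖(E (ξ : X)).comp (Q.comp (E (ξ : X)).adjoint)‖) := by
    refine ⟨Real.sqrt (kbar * kbar), ?_⟩
    rintro r ⟨ξ, rfl⟩
    apply Real.sqrt_le_sqrt
    calc ‖(E (ξ : X)).comp (Q.comp (E (ξ : X)).adjoint)‖
        ≤ ‖E (ξ : X)‖ * ‖Q.comp (E (ξ : X)).adjoint‖ := ContinuousLinearMap.opNorm_comp_le _ _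
      _ ≤ ‖E (ξ : X)‖ * (‖Q‖ * ‖(E (ξ : X)).adjoint‖) :=
          mul_le_mul_of_nonneg_left (ContinuousLinearMap.opNorm_comp_le _ _) (norm_nonneg _)
      _ ≤ kbar * (1 * kbar) := by
          have hQ1 : ‖Q‖ ≤ 1 := ContinuousLinearMap.opNorm_le_bound _ zero_le_one
            (fun g => by simpa using hQnorm g)
          have hadj : ‖(E (ξ : X)).adjoint‖ ≤ kbar := by
            have := ContinuousLinearMap.adjoint.norm_map (E (ξ : X))
            rw [this]; exact hk _
          exact mul_le_mul (hk _) (mul_le_mul hQ1 hadj (norm_nonneg _) zero_le_one)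
            (mul_nonneg (norm_nonneg _) (norm_nonneg _)) hkx
      _ = kbar * kbar := by ring
  -- pointwise bound on M
  have hpoint : ∀ ξ ∈ M, ‖Q ((E ξ).adjoint (v ξ))‖ ≤ Ssup * ‖v ξ‖ := by
    intro ξ hξ
    set y := v ξ
    set k := (E ξ).adjoint y with hk'
    have hsq : ‖Q k‖ ^ 2 ≤ ‖(E ξ).comp (Q.comp (E ξ).adjoint)‖ * ‖y‖ ^ 2 := by
      have h1 : ‖Q k‖ ^ 2 = ⟪k, Q k⟫_ℝ := by
        rw [← real_inner_self_eq_norm_sq, hQsa k (Q k), hQidem k]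
      have h2 : ⟪k, Q k⟫_ℝ = ⟪y, (E ξ) (Q k)⟫_ℝ := by
        rw [hk', ContinuousLinearMap.adjoint_inner_left]
      have h3 : (E ξ) (Q k) = ((E ξ).comp (Q.comp (E ξ).adjoint)) y := rfl
      calc ‖Q k‖ ^ 2 = ⟪y, ((E ξ).comp (Q.comp (E ξ).adjoint)) y⟫_ℝ := by rw [h1, h2, h3]
        _ ≤ ‖y‖ * ‖((E ξ).comp (Q.comp (E ξ).adjoint)) y‖ := real_inner_le_norm _ _
        _ ≤ ‖y‖ * (‖(E ξ).comp (Q.comp (E ξ).adjoint)‖ * ‖y‖) :=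
            mul_le_mul_of_nonneg_left (ContinuousLinearMap.le_opNorm _ _) (norm_nonneg _)
        _ = ‖(E ξ).comp (Q.comp (E ξ).adjoint)‖ * ‖y‖ ^ 2 := by ring
    have hQk : ‖Q k‖ ≤ Real.sqrt ‖(E ξ).comp (Q.comp (E ξ).adjoint)‖ * ‖y‖ := by
      have := Real.sqrt_le_sqrt hsq
      rw [Real.sqrt_sq (norm_nonneg (Q k))] at this
      calc ‖Q k‖ ≤ Real.sqrt (‖(E ξ).comp (Q.comp (E ξ).adjoint)‖ * ‖y‖ ^ 2) := this
        _ = Real.sqrt ‖(E ξ).comp (Q.comp (E ξ).adjoint)‖ * ‖y‖ := by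
            rw [Real.sqrt_mul (norm_nonneg _), Real.sqrt_sq (norm_nonneg y)]
    refine le_trans hQk (mul_le_mul_of_nonneg_right ?_ (norm_nonneg y))
    exact le_ciSup hbdd (⟨ξ, hξ⟩ : M)
  -- integrability of ‖v‖
  have hvnorm : Integrable (fun ξ => ‖v ξ‖) μ := by
    refine Integrable.mono' ((integrable_const (1:ℝ)).add hv2) hv.norm
      (Filter.Eventually.of_forall fun ξ => ?_)
    rw [Real.norm_of_nonneg (norm_nonneg _)]
    simp only [Pi.add_apply]
    nlinarith [norm_nonneg (v ξ), sq_nonneg (‖v ξ‖ - 1)]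
  -- f - P f = Q f and Q f is an integral
  have hQf : Q f = ∫ ξ, Q ((E ξ).adjoint (v ξ)) ∂μ := by
    rw [hf]; exact (ContinuousLinearMap.integral_comp_comm Q hKv).symm
  have hQint : Integrable (fun ξ => Q ((E ξ).adjoint (v ξ))) μ := Q.integrable_comp hKv
  have hnormQf : ‖Q f‖ ≤ Ssup * ∫ ξ, ‖v ξ‖ ∂μ := by
    rw [hQf]
    calc ‖∫ ξ, Q ((E ξ).adjoint (v ξ)) ∂μ‖ ≤ ∫ ξ, ‖Q ((E ξ).adjoint (v ξ))‖ ∂μ :=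
          norm_integral_le_integral_norm _
      _ ≤ ∫ ξ, Ssup * ‖v ξ‖ ∂μ := by
          refine integral_mono_ae hQint.norm (hvnorm.const_mul Ssup) ?_
          have : ∀ᵐ ξ ∂μ, ξ ∈ M := by
            rw [MeasureTheory.ae_iff]
            exact hMc
          filter_upwards [this] with ξ hξ
          exact hpoint ξ hξ
      _ = Ssup * ∫ ξ, ‖v ξ‖ ∂μ := integral_const_mul _ _
  have hCS : ∫ ξ, ‖v ξ‖ ∂μ ≤ Real.sqrt (μ Set.univ).toReal
      * Real.sqrt (∫ ξ, ‖v ξ‖ ^ 2 ∂μ) := integral_norm_le_sqrt_mul_sqrt μ v hv hv2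
  have hmain : ‖(E x) (f - P f)‖ ≤ kbar * (Ssup * ∫ ξ, ‖v ξ‖ ∂μ) := by
    have h1 : ‖(E x) (f - P f)‖ ≤ ‖E x‖ * ‖f - P f‖ := ContinuousLinearMap.le_opNorm _ _
    have h2 : f - P f = Q f := rfl
    calc ‖(E x) (f - P f)‖ ≤ ‖E x‖ * ‖Q f‖ := by rw [← h2]; exact h1
      _ ≤ kbar * (Ssup * ∫ ξ, ‖v ξ‖ ∂μ) :=
          mul_le_mul (hk x) hnormQf (norm_nonneg _) hkx
  have hintnn : 0 ≤ ∫ ξ, ‖v ξ‖ ∂μ := integral_nonneg fun ξ => norm_nonneg _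
  calc ‖(E x) (f - P f)‖ ≤ kbar * (Ssup * ∫ ξ, ‖v ξ‖ ∂μ) := hmain
    _ ≤ kbar * (Ssup * (Real.sqrt (μ Set.univ).toReal
          * Real.sqrt (∫ ξ, ‖v ξ‖ ^ 2 ∂μ))) := by
        refine mul_le_mul_of_nonneg_left (mul_le_mul_of_nonneg_left hCS hSsup_nonneg) hkx
    _ = kbar * Real.sqrt (μ Set.univ).toReal * Ssup * Real.sqrt (∫ ξ, ‖v ξ‖ ^ 2 ∂μ) := by
        ring
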